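/- If random variables Z₁, …, Z_J are mutually independent and W is any random variable, then the sum of marginal mutual informations is bounded by the joint mutual information: Σ_{j=1}^J I(W; Z_j) ≤ I(W; (Z₁,…,Z_J)). (This is the paper's 'single-letterization' inequality Eq. (8): aligning each modality individually gives a lower bound of aligning all modalities jointly.) -/

import Mathlib

open Real Finset

/-- Distribution of a random variable `X` on a finite probability space with weights `p`. -/
noncomputable def rvDist {Ω γ : Type*} [Fintype Ω] [DecidableEq γ]
    (p : Ω → ℝ) (X : Ω → γ) (y : γ) : ℝ :=
  ∑ ω, if X ω = y then p ω else 0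

/-- Shannon entropy of the distribution of a random variable. -/
noncomputable def rvEntropy {Ω γ : Type*} [Fintype Ω] [Fintype γ] [DecidableEq γ]
    (p : Ω → ℝ) (X : Ω → γ) : ℝ :=
  -∑ y, rvDist p X y * Real.log (rvDist p X y)

/-- Mutual information `I(X;Y) = H(X) + H(Y) − H(X,Y)`. -/
noncomputable def rvMI {Ω γ δ : Type*} [Fintype Ω] [Fintype γ] [Fintype δ]
    [DecidableEq γ] [DecidableEq δ] (p : Ω → ℝ) (X : Ω → γ) (Y : Ω → δ) : ℝ :=
  rvEntropy p X + rvEntropy p Y - rvEntropy p (fun ω => (X ω, Y ω))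

section aux
variable {Ω : Type*} [Fintype Ω]

lemma rvDist_nonneg {γ : Type*} [DecidableEq γ] {p : Ω → ℝ} (hp0 : ∀ ω, 0 ≤ p ω)
    (X : Ω → γ) (y : γ) : 0 ≤ rvDist p X y :=
  Finset.sum_nonneg fun ω _ => by split <;> simp [hp0 ω]

lemma sum_rvDist_mul {γ : Type*} [Fintype γ] [DecidableEq γ] (p : Ω → ℝ)
    (X : Ω → γ) (f : γ → ℝ) :
    ∑ y, rvDist p X y * f y = ∑ ω, p ω * f (X ω) := by
  unfold rvDist
  simp only [Finset.sum_mul, ite_mul, zero_mul]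
  rw [Finset.sum_comm]
  exact Finset.sum_congr rfl fun ω _ => by rw [Finset.sum_ite_eq]; simp

lemma sum_rvDist {γ : Type*} [Fintype γ] [DecidableEq γ] (p : Ω → ℝ) (X : Ω → γ) :
    ∑ y, rvDist p X y = ∑ ω, p ω := by
  have := sum_rvDist_mul p X (fun _ => 1)
  simpa using this

lemma rvDist_le_of_imp {γ δ : Type*} [DecidableEq γ] [DecidableEq δ] {p : Ω → ℝ}
    (hp0 : ∀ ω, 0 ≤ p ω) (X : Ω → γ) (Y : Ω → δ) (y : γ) (c : δ)
    (h : ∀ ω, X ω = y → Y ω = c) : rvDist p X y ≤ rvDist p Y c := by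
  refine Finset.sum_le_sum fun ω _ => ?_
  by_cases hx : X ω = y
  · simp [hx, h ω hx]
  · simp only [hx, if_false]
    split <;> simp [hp0 ω]

lemma sum_rvDist_pair {γ δ : Type*} [Fintype δ] [DecidableEq γ] [DecidableEq δ]
    (p : Ω → ℝ) (X : Ω → γ) (Y : Ω → δ) (w : γ) :
    ∑ z, rvDist p (fun ω => (X ω, Y ω)) (w, z) = rvDist p X w := by
  unfold rvDist
  rw [Finset.sum_comm]
  refine Finset.sum_congr rfl fun ω _ => ?_
  by_cases h : X ω = w
  · simp [Prod.ext_iff, h, Finset.sum_ite_eq]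
  · simp [Prod.ext_iff, h]

lemma gibbs {ι : Type*} [Fintype ι] (a b : ι → ℝ) (ha : ∀ i, 0 ≤ a i) (hb : ∀ i, 0 ≤ b i)
    (hab : ∀ i, b i = 0 → a i = 0) (hsum : ∑ i, b i ≤ ∑ i, a i) :
    ∑ i, a i * Real.log (b i) ≤ ∑ i, a i * Real.log (a i) := by
  have key : ∀ i, a i * Real.log (b i) - a i * Real.log (a i) ≤ b i - a i := by
    intro i
    rcases eq_or_lt_of_le (ha i) with h | h
    · simp [← h, hb i]
    · have hbi : 0 < b i := lt_of_le_of_ne (hb i) fun h' => by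
        have := hab i h'.symm; linarith
      have hlog : Real.log (b i / a i) ≤ b i / a i - 1 :=
        Real.log_le_sub_one_of_pos (div_pos hbi h)
      have h2 := mul_le_mul_of_nonneg_left hlog h.le
      rw [Real.log_div (ne_of_gt hbi) (ne_of_gt h), mul_sub, mul_sub] at h2
      have h3 : a i * (b i / a i) = b i := by field_simp
      linarith
  calc ∑ i, a i * Real.log (b i)
      ≤ ∑ i, (a i * Real.log (a i) + (b i - a i)) :=
        Finset.sum_le_sum fun i _ => by linarith [key i]
    _ = ∑ i, a i * Real.log (a i) + (∑ i, b i - ∑ i, a i) := by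
        rw [Finset.sum_add_distrib, Finset.sum_sub_distrib]
    _ ≤ _ := by linarith

lemma sum_prod_mul_log {ι : Type*} [Fintype ι] [DecidableEq ι] {β : ι → Type*}
    [∀ i, Fintype (β i)] (q : ∀ i, β i → ℝ) (h1 : ∀ i, ∑ z, q i z = 1) :
    ∑ v : ∀ i, β i, (∏ i, q i (v i)) * Real.log (∏ i, q i (v i))
      = ∑ i, ∑ z, q i z * Real.log (q i z) := by
  have step1 : ∀ v : ∀ i, β i, (∏ i, q i (v i)) * Real.log (∏ i, q i (v i))
      = ∑ i, (∏ k, q k (v k)) * Real.log (q i (v i)) := by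
    intro v
    by_cases h : ∏ i, q i (v i) = 0
    · simp [h]
    · rw [Real.log_prod fun i _ => Finset.prod_ne_zero_iff.mp h i (Finset.mem_univ i),
        Finset.mul_sum]
  simp only [step1]
  rw [Finset.sum_comm]
  refine Finset.sum_congr rfl fun i _ => ?_
  have hg : ∀ v : ∀ k, β k, (∏ k, q k (v k)) * Real.log (q i (v i))
      = ∏ k, (q k (v k) * if k = i then Real.log (q k (v k)) else 1) := by
    intro v
    rw [Finset.prod_mul_distrib]
    congr 1
    rw [Finset.prod_ite_eq' Finset.univ i (fun k => Real.log (q k (v k)))]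
    simp
  simp only [hg]
  rw [← Fintype.prod_sum (fun k z => q k z * if k = i then Real.log (q k z) else 1)]
  rw [Finset.prod_eq_single i (fun k _ hk => by simp [hk, h1 k])
    (fun h => absurd (Finset.mem_univ i) h)]
  simp

end aux

/-- Single-letterization: if `Z₁, …, Z_J` are mutually independent, then
`Σ_j I(W; Z_j) ≤ I(W; (Z₁,…,Z_J))`. -/

theorem sum_MI_le_MI_joint_of_indep {Ω : Type*} [Fintype Ω] {J : ℕ}
    {β : Fin J → Type*} [∀ j, Fintype (β j)] [∀ j, DecidableEq (β j)]
    {γ : Type*} [Fintype γ] [DecidableEq γ]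
    (p : Ω → ℝ) (hp0 : ∀ ω, 0 ≤ p ω) (hp1 : ∑ ω, p ω = 1)
    (Z : ∀ j, Ω → β j) (W : Ω → γ)
    (hindep : ∀ v : ∀ j, β j,
      rvDist p (fun ω j => Z j ω) v = ∏ j, rvDist p (Z j) (v j)) :
    ∑ j, rvMI p W (Z j) ≤ rvMI p W (fun ω j => Z j ω) := by
  classical
  -- Step A : entropy of the joint Z equals the sum of entropies
  have hZent : rvEntropy p (fun ω j => Z j ω) = ∑ j, rvEntropy p (Z j) := by
    unfold rvEntropy
    rw [Finset.sum_neg_distrib]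
    congr 1
    calc ∑ v, rvDist p (fun ω j => Z j ω) v * Real.log (rvDist p (fun ω j => Z j ω) v)
        = ∑ v : ∀ j, β j, (∏ j, rvDist p (Z j) (v j)) * Real.log (∏ j, rvDist p (Z j) (v j)) :=
          Finset.sum_congr rfl fun v _ => by rw [hindep v]
      _ = _ := sum_prod_mul_log _ fun j => (sum_rvDist p (Z j)).trans hp1
  -- basic comparisons
  have hW0 : ∀ x : γ × (∀ j, β j),
      rvDist p (fun ω => (W ω, fun j => Z j ω)) x ≤ rvDist p W x.1 :=
    fun x => rvDist_le_of_imp hp0 _ _ _ _ fun ω h => congrArg Prod.fst h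
  have hj0 : ∀ (j : Fin J) (x : γ × (∀ j, β j)),
      rvDist p (fun ω => (W ω, fun j => Z j ω)) x
        ≤ rvDist p (fun ω => (W ω, Z j ω)) (x.1, x.2 j) :=
    fun j x => rvDist_le_of_imp hp0 _ _ _ _ fun ω h => by rw [← h]
  have han : ∀ x : γ × (∀ j, β j), 0 ≤ rvDist p (fun ω => (W ω, fun j => Z j ω)) x :=
    fun x => rvDist_nonneg hp0 _ x
  -- Gibbs hypotheses
  have hab : ∀ x : γ × (∀ j, β j),
      rvDist p W x.1 * ∏ j, (rvDist p (fun ω => (W ω, Z j ω)) (x.1, x.2 j) / rvDist p W x.1) = 0 →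
      rvDist p (fun ω => (W ω, fun j => Z j ω)) x = 0 := by
    intro x hx
    rcases mul_eq_zero.mp hx with h | h
    · exact le_antisymm (h ▸ hW0 x) (han x)
    · obtain ⟨j, -, hj⟩ := Finset.prod_eq_zero_iff.mp h
      rcases div_eq_zero_iff.mp hj with h2 | h2
      · exact le_antisymm (h2 ▸ hj0 j x) (han x)
      · exact le_antisymm (h2 ▸ hW0 x) (han x)
  have hsumb : (∑ x : γ × (∀ j, β j),
        rvDist p W x.1 * ∏ j, (rvDist p (fun ω => (W ω, Z j ω)) (x.1, x.2 j) / rvDist p W x.1))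
      ≤ ∑ x : γ × (∀ j, β j), rvDist p (fun ω => (W ω, fun j => Z j ω)) x := by
    rw [(sum_rvDist p _).trans hp1, Fintype.sum_prod_type]
    calc ∑ w, ∑ v : ∀ j, β j,
          rvDist p W w * ∏ j, (rvDist p (fun ω => (W ω, Z j ω)) (w, v j) / rvDist p W w)
        = ∑ w, rvDist p W w * ∏ j, (rvDist p W w / rvDist p W w) := by
          refine Finset.sum_congr rfl fun w _ => ?_
          rw [← Finset.mul_sum,
            ← Fintype.prod_sum (fun j z => rvDist p (fun ω => (W ω, Z j ω)) (w, z) / rvDist p W w)]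
          congr 1
          exact Finset.prod_congr rfl fun j _ => by
            rw [← Finset.sum_div, sum_rvDist_pair]
      _ ≤ ∑ w, rvDist p W w := Finset.sum_le_sum fun w _ => by
          by_cases h : rvDist p W w = 0
          · simp [h]
          · simp [div_self h]
      _ = 1 := (sum_rvDist p W).trans hp1
  have hgibbs := gibbs (rvDist p (fun ω => (W ω, fun j => Z j ω)))
    (fun x => rvDist p W x.1 *
      ∏ j, (rvDist p (fun ω => (W ω, Z j ω)) (x.1, x.2 j) / rvDist p W x.1))
    han
    (fun x => mul_nonneg (rvDist_nonneg hp0 _ _) (Finset.prod_nonneg fun j _ =>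
      div_nonneg (rvDist_nonneg hp0 _ _) (rvDist_nonneg hp0 _ _)))
    hab hsumb
  -- expand the left side of Gibbs
  have hlog : ∀ x : γ × (∀ j, β j),
      rvDist p (fun ω => (W ω, fun j => Z j ω)) x *
        Real.log (rvDist p W x.1 *
          ∏ j, (rvDist p (fun ω => (W ω, Z j ω)) (x.1, x.2 j) / rvDist p W x.1))
      = rvDist p (fun ω => (W ω, fun j => Z j ω)) x * Real.log (rvDist p W x.1)
        + ∑ j, (rvDist p (fun ω => (W ω, fun j => Z j ω)) x *
              Real.log (rvDist p (fun ω => (W ω, Z j ω)) (x.1, x.2 j))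
            - rvDist p (fun ω => (W ω, fun j => Z j ω)) x * Real.log (rvDist p W x.1)) := by
    intro x
    by_cases hx : rvDist p (fun ω => (W ω, fun j => Z j ω)) x = 0
    · simp [hx]
    · have hW : rvDist p W x.1 ≠ 0 := fun h => hx (le_antisymm (h ▸ hW0 x) (han x))
      have hj : ∀ j, rvDist p (fun ω => (W ω, Z j ω)) (x.1, x.2 j) ≠ 0 :=
        fun j h => hx (le_antisymm (h ▸ hj0 j x) (han x))
      rw [Real.log_mul hW (Finset.prod_ne_zero_iff.mpr fun j _ => div_ne_zero (hj j) hW),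
        Real.log_prod fun j _ => div_ne_zero (hj j) hW,
        show (∑ j, Real.log (rvDist p (fun ω => (W ω, Z j ω)) (x.1, x.2 j) / rvDist p W x.1))
            = ∑ j, (Real.log (rvDist p (fun ω => (W ω, Z j ω)) (x.1, x.2 j))
                - Real.log (rvDist p W x.1)) from
          Finset.sum_congr rfl fun j _ => Real.log_div (hj j) hW,
        mul_add, Finset.mul_sum]
      simp only [mul_sub]
  -- marginalizations
  have hmargW : (∑ x : γ × (∀ j, β j),
        rvDist p (fun ω => (W ω, fun j => Z j ω)) x * Real.log (rvDist p W x.1))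
      = ∑ w, rvDist p W w * Real.log (rvDist p W w) :=
    (sum_rvDist_mul p (fun ω => (W ω, fun j => Z j ω))
        (fun x => Real.log (rvDist p W x.1))).trans
      (sum_rvDist_mul p W (fun w => Real.log (rvDist p W w))).symm
  have hmargj : ∀ j : Fin J, (∑ x : γ × (∀ j, β j),
        rvDist p (fun ω => (W ω, fun j => Z j ω)) x *
          Real.log (rvDist p (fun ω => (W ω, Z j ω)) (x.1, x.2 j)))
      = ∑ y : γ × β j, rvDist p (fun ω => (W ω, Z j ω)) y *
          Real.log (rvDist p (fun ω => (W ω, Z j ω)) y) :=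
    fun j => (sum_rvDist_mul p (fun ω => (W ω, fun j => Z j ω))
        (fun x => Real.log (rvDist p (fun ω => (W ω, Z j ω)) (x.1, x.2 j)))).trans
      (sum_rvDist_mul p (fun ω => (W ω, Z j ω))
        (fun y => Real.log (rvDist p (fun ω => (W ω, Z j ω)) y))).symm
  rw [Finset.sum_congr rfl fun x _ => hlog x, Finset.sum_add_distrib, Finset.sum_comm,
    hmargW] at hgibbs
  have hrw : ∀ j : Fin J, (∑ x : γ × (∀ j, β j),
        (rvDist p (fun ω => (W ω, fun j => Z j ω)) x *
            Real.log (rvDist p (fun ω => (W ω, Z j ω)) (x.1, x.2 j))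
          - rvDist p (fun ω => (W ω, fun j => Z j ω)) x * Real.log (rvDist p W x.1)))
      = (∑ y : γ × β j, rvDist p (fun ω => (W ω, Z j ω)) y *
            Real.log (rvDist p (fun ω => (W ω, Z j ω)) y))
        - ∑ w, rvDist p W w * Real.log (rvDist p W w) := by
    intro j
    rw [Finset.sum_sub_distrib, hmargj j, hmargW]
  rw [Finset.sum_congr rfl fun j _ => hrw j, Finset.sum_sub_distrib, Finset.sum_const,
    Finset.card_univ, Fintype.card_fin, nsmul_eq_mul] at hgibbs
  -- assemble
  have hB : rvEntropy p (fun ω => (W ω, fun j => Z j ω)) + ((J : ℝ) - 1) * rvEntropy p W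
      ≤ ∑ j, rvEntropy p (fun ω => (W ω, Z j ω)) := by
    unfold rvEntropy
    rw [Finset.sum_neg_distrib]
    linarith
  have h1 : ∑ j, rvMI p W (Z j)
      = (J : ℝ) * rvEntropy p W + ∑ j, rvEntropy p (Z j)
        - ∑ j, rvEntropy p (fun ω => (W ω, Z j ω)) := by
    simp only [rvMI]
    rw [Finset.sum_sub_distrib, Finset.sum_add_distrib, Finset.sum_const,
      Finset.card_univ, Fintype.card_fin, nsmul_eq_mul]
  have h2 : rvMI p W (fun ω j => Z j ω)
      = rvEntropy p W + ∑ j, rvEntropy p (Z j)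
        - rvEntropy p (fun ω => (W ω, fun j => Z j ω)) := by
    simp only [rvMI]
    rw [hZent]
  rw [h1, h2]
  linarith
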